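/- Let A be a real symmetric n×n matrix such that 1 + A is positive definite. Then 0 ≤ tr(A) − log det(1 + A) ≤ ‖(1 + A)⁻¹‖·‖A‖_F² and 0 ≤ log det(1 + A) − tr( A·(1 + A)⁻¹ ) ≤ ‖(1 + A)⁻¹‖·‖A‖_F². If moreover A is positive semidefinite, then tr(A) − log det(1 + A) ≤ (1/2)·‖A‖_F² and log det(1 + A) − tr( A·(1 + A)⁻¹ ) ≤ (1/2)·‖A‖_F². -/

import Mathlib

open Matrix Real

/-- The Frobenius (Hilbert–Schmidt) norm of a real matrix. -/
noncomputable def matFrobNorm {m n : Type*} [Fintype m] [Fintype n]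
    (A : Matrix m n ℝ) : ℝ :=
  Real.sqrt (∑ i, ∑ j, (A i j) ^ 2)

/-- The operator norm of the linear map induced by a real square matrix on
Euclidean space. -/
noncomputable def matOpNorm {n : Type*} [Fintype n] [DecidableEq n]
    (A : Matrix n n ℝ) : ℝ :=
  ‖(Matrix.toEuclideanCLM (𝕜 := ℝ) A : EuclideanSpace ℝ n →L[ℝ] EuclideanSpace ℝ n)‖

section ScalarLemmas

lemma hc_scal_log_le {x : ℝ} (hx : 0 < 1 + x) : Real.log (1+x) ≤ x := by
  have := Real.log_le_sub_one_of_pos hx; linarith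

lemma hc_scal_le_log {x : ℝ} (hx : 0 < 1 + x) : x / (1+x) ≤ Real.log (1+x) := by
  have h := Real.log_le_sub_one_of_pos (inv_pos.mpr hx)
  rw [Real.log_inv] at h
  have h2 : x / (1+x) = 1 - (1+x)⁻¹ := by field_simp; ring
  linarith

lemma hc_scalL2 {x : ℝ} (hx : 0 < 1 + x) : x - Real.log (1+x) ≤ (1+x)⁻¹ * x^2 := by
  have h := hc_scal_le_log hx
  have h2 : x - (1+x)⁻¹ * x^2 = x/(1+x) := by field_simp; ring
  linarith

lemma hc_scalL4 {x : ℝ} (hx : 0 < 1 + x) :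
    Real.log (1+x) - x * (1+x)⁻¹ ≤ (1+x)⁻¹ * x^2 := by
  have h := hc_scal_log_le hx
  have h2 : x * (1+x)⁻¹ + (1+x)⁻¹ * x^2 = x := by field_simp
  linarith

lemma hc_scalL5 {x : ℝ} (hx : 0 ≤ x) : x - Real.log (1+x) ≤ x^2/2 := by
  set f : ℝ → ℝ := fun y => Real.log (1+y) - y + y^2/2 with hf
  have key : ∀ y : ℝ, 0 ≤ y → HasDerivAt f ((1+y)⁻¹ - 1 + y) y := by
    intro y hy
    have hne : (1:ℝ) + y ≠ 0 := by linarith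
    have h1 : HasDerivAt (fun y : ℝ => 1 + y) 1 y := by
      simpa using (hasDerivAt_id y).const_add (1:ℝ)
    have hlog : HasDerivAt (fun y : ℝ => Real.log (1+y)) ((1+y)⁻¹) y := by
      have := (Real.hasDerivAt_log hne).comp y h1; rw [mul_one] at this; exact this
    have hsq : HasDerivAt (fun y : ℝ => y^2/2) y y := by
      simpa using (hasDerivAt_pow 2 y).div_const 2
    exact (hlog.sub (hasDerivAt_id y)).add hsq
  have mono : MonotoneOn f (Set.Ici (0:ℝ)) := by
    apply monotoneOn_of_deriv_nonneg (convex_Ici 0)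
    · intro y hy
      exact ((key y hy).continuousAt).continuousWithinAt
    · intro y hy
      rw [interior_Ici] at hy
      exact ((key y (le_of_lt hy)).differentiableAt).differentiableWithinAt
    · intro y hy
      rw [interior_Ici] at hy
      rw [(key y hy.le).deriv]
      have hy' : (0:ℝ) < y := hy
      have hne : (1:ℝ) + y ≠ 0 := by linarith
      have h2 : (1+y)⁻¹ - 1 + y = y^2 * (1+y)⁻¹ := by field_simp; ring
      rw [h2]
      exact mul_nonneg (sq_nonneg y) (inv_nonneg.mpr (by linarith))
  have h0 : f 0 ≤ f x := mono Set.self_mem_Ici hx hx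
  simp only [hf, Real.log_one, add_zero, zero_pow] at h0
  norm_num at h0
  linarith

lemma hc_scalL6 {x : ℝ} (hx : 0 ≤ x) : Real.log (1+x) - x * (1+x)⁻¹ ≤ x^2/2 := by
  set f : ℝ → ℝ := fun y => y^2/2 + y * (1+y)⁻¹ - Real.log (1+y) with hf
  have key : ∀ y : ℝ, 0 ≤ y →
      HasDerivAt f (y + ((1*(1+y) - y*1)/(1+y)^2) - (1+y)⁻¹) y := by
    intro y hy
    have hne : (1:ℝ) + y ≠ 0 := by linarith
    have h1 : HasDerivAt (fun y : ℝ => 1 + y) 1 y := by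
      simpa using (hasDerivAt_id y).const_add (1:ℝ)
    have hlog : HasDerivAt (fun y : ℝ => Real.log (1+y)) ((1+y)⁻¹) y := by
      have := (Real.hasDerivAt_log hne).comp y h1; rw [mul_one] at this; exact this
    have hdiv : HasDerivAt (fun y : ℝ => y * (1+y)⁻¹) ((1*(1+y) - y*1)/(1+y)^2) y := by
      have := (hasDerivAt_id y).div h1 hne; simp only [id, div_eq_mul_inv] at this ⊢; exact this
    have hsq : HasDerivAt (fun y : ℝ => y^2/2) y y := by
      simpa using (hasDerivAt_pow 2 y).div_const 2
    exact (hsq.add hdiv).sub hlog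
  have mono : MonotoneOn f (Set.Ici (0:ℝ)) := by
    apply monotoneOn_of_deriv_nonneg (convex_Ici 0)
    · intro y hy
      exact ((key y hy).continuousAt).continuousWithinAt
    · intro y hy
      rw [interior_Ici] at hy
      exact ((key y (le_of_lt hy)).differentiableAt).differentiableWithinAt
    · intro y hy
      rw [interior_Ici] at hy
      rw [(key y hy.le).deriv]
      have hy' : (0:ℝ) < y := hy
      have hne : (1:ℝ) + y ≠ 0 := by linarith
      have h2 : y + ((1*(1+y) - y*1)/(1+y)^2) - (1+y)⁻¹ = y^2*(y+2)/(1+y)^2 := by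
        field_simp; ring
      rw [h2]
      exact div_nonneg (mul_nonneg (sq_nonneg y) (by linarith)) (sq_nonneg _)
  have h0 : f 0 ≤ f x := mono Set.self_mem_Ici hx hx
  simp only [hf, Real.log_one, add_zero, zero_mul, zero_pow] at h0
  norm_num at h0
  linarith

end ScalarLemmas

section MatrixLemmas

variable {n : Type*} [Fintype n] [DecidableEq n]

lemma hc_conj_trace (U : Matrix n n ℝ) (hU : star U * U = 1) (d : n → ℝ) :
    (U * diagonal d * star U).trace = ∑ i, d i := by
  rw [Matrix.trace_mul_cycle, hU, one_mul, Matrix.trace_diagonal]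

lemma hc_conj_mul (U : Matrix n n ℝ) (hU : star U * U = 1) (d e : n → ℝ) :
    (U * diagonal d * star U) * (U * diagonal e * star U)
      = U * diagonal (fun i => d i * e i) * star U := by
  have h1 : star U * (U * (diagonal e * star U)) = diagonal e * star U := by
    rw [← Matrix.mul_assoc, hU, one_mul]
  simp only [Matrix.mul_assoc, h1]
  rw [← Matrix.mul_assoc (diagonal d) (diagonal e), Matrix.diagonal_mul_diagonal]

lemma hc_le_opNorm (M : Matrix n n ℝ) (hH : M.IsHermitian) (B : Matrix n n ℝ) (c : ℝ)
    (hc : 0 ≤ c) (i : n)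
    (hmv : B *ᵥ (⇑(hH.eigenvectorBasis i)) = c • ⇑(hH.eigenvectorBasis i)) :
    c ≤ matOpNorm B := by
  set v : EuclideanSpace ℝ n := hH.eigenvectorBasis i with hv
  have hnv : ‖v‖ = 1 := hH.eigenvectorBasis.orthonormal.1 i
  have hTv : (toEuclideanCLM (𝕜 := ℝ) B) v = c • v := by
    apply WithLp.ofLp_injective
    rw [ofLp_toEuclideanCLM, WithLp.ofLp_smul]
    exact hmv
  have hle : ‖(toEuclideanCLM (𝕜 := ℝ) B) v‖ ≤ matOpNorm B * ‖v‖ :=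
    (toEuclideanCLM (𝕜 := ℝ) B).le_opNorm v
  rw [hTv, norm_smul, hnv, Real.norm_eq_abs, abs_of_nonneg hc] at hle
  simpa using hle

end MatrixLemmas

theorem logdet_Hilbert_Carleman_bound
    {n : Type*} [Fintype n] [DecidableEq n]
    (A : Matrix n n ℝ) (hA : A.IsSymm) (hpos : ((1 : Matrix n n ℝ) + A).PosDef) :
    (0 ≤ A.trace - Real.log ((1 + A).det) ∧
      A.trace - Real.log ((1 + A).det) ≤
        matOpNorm ((1 + A)⁻¹) * (matFrobNorm A) ^ 2) ∧
    (0 ≤ Real.log ((1 + A).det) - (A * (1 + A)⁻¹).trace ∧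
      Real.log ((1 + A).det) - (A * (1 + A)⁻¹).trace ≤
        matOpNorm ((1 + A)⁻¹) * (matFrobNorm A) ^ 2) ∧
    (A.PosSemidef →
      A.trace - Real.log ((1 + A).det) ≤ (1 / 2) * (matFrobNorm A) ^ 2 ∧
      Real.log ((1 + A).det) - (A * (1 + A)⁻¹).trace ≤
        (1 / 2) * (matFrobNorm A) ^ 2) := by
  classical
  have hH : A.IsHermitian := by
    rwa [Matrix.IsHermitian, Matrix.conjTranspose_eq_transpose_of_trivial]
  set μ : n → ℝ := hH.eigenvalues with hμdef
  set U : Matrix n n ℝ := (hH.eigenvectorUnitary : Matrix n n ℝ) with hUdef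
  have hUU : star U * U = 1 := by
    simp [hUdef]
  have hUU' : U * star U = 1 := by
    simp [hUdef]
  have hspec : A = U * diagonal μ * star U := by simpa using hH.spectral_theorem
  -- 1 + μ i > 0
  have hposμ : ∀ i, 0 < 1 + μ i := by
    intro i
    have hv0 : (⇑(hH.eigenvectorBasis i) : n → ℝ) ≠ 0 := by
      have h := hH.eigenvectorBasis.orthonormal.ne_zero i
      intro hcontra
      apply h
      ext j
      exact congrFun hcontra j
    have hq := hpos.dotProduct_mulVec_pos hv0
    rw [add_mulVec, one_mulVec, hH.mulVec_eigenvectorBasis, dotProduct_add,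
      dotProduct_smul] at hq
    have hnorm : star (⇑(hH.eigenvectorBasis i)) ⬝ᵥ ⇑(hH.eigenvectorBasis i) = 1 := by
      have h1 : ‖hH.eigenvectorBasis i‖ = 1 := hH.eigenvectorBasis.orthonormal.1 i
      have h2 : (star (⇑(hH.eigenvectorBasis i)) ⬝ᵥ ⇑(hH.eigenvectorBasis i))
          = ‖hH.eigenvectorBasis i‖ ^ 2 := by
        rw [← real_inner_self_eq_norm_sq]
        simp [dotProduct, PiLp.inner_apply, mul_comm]
        have h3 := real_inner_self_eq_norm_sq (hH.eigenvectorBasis i)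
        rw [h1, PiLp.inner_apply] at h3
        simpa [mul_comm, sq] using h3
      rw [h2, h1]; norm_num
    rw [hnorm] at hq
    simp only [smul_eq_mul, mul_one] at hq
    linarith
  -- 1 + A conjugation
  have honeadd : (1 : Matrix n n ℝ) + A = U * diagonal (fun i => 1 + μ i) * star U := by
    have hd : diagonal (fun i => 1 + μ i) = 1 + diagonal μ := by
      rw [← Matrix.diagonal_one, ← Matrix.diagonal_add]
    rw [hd, Matrix.mul_add, Matrix.mul_one, Matrix.add_mul, hUU', ← hspec]
  -- trace
  have htr : A.trace = ∑ i, μ i := by rw [hspec, hc_conj_trace U hUU]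
  -- det and log det
  have hdet : (1 + A).det = ∏ i, (1 + μ i) := by
    rw [honeadd, Matrix.det_mul_right_comm, hUU', one_mul, Matrix.det_diagonal]
  have hlogdet : Real.log ((1 + A).det) = ∑ i, Real.log (1 + μ i) := by
    rw [hdet]
    exact Real.log_prod (fun i _ => ne_of_gt (hposμ i))
  -- inverse
  have hinv : ((1 : Matrix n n ℝ) + A)⁻¹ = U * diagonal (fun i => (1 + μ i)⁻¹) * star U := by
    apply Matrix.inv_eq_right_inv
    rw [honeadd, hc_conj_mul U hUU]
    have h1 : (fun i => (1 + μ i) * (1 + μ i)⁻¹) = fun _ => (1:ℝ) := by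
      funext i; exact mul_inv_cancel₀ (ne_of_gt (hposμ i))
    rw [h1, Matrix.diagonal_one, Matrix.mul_one, hUU']
  -- trace of A * (1+A)⁻¹
  have htr2 : (A * (1 + A)⁻¹).trace = ∑ i, μ i * (1 + μ i)⁻¹ := by
    rw [hinv]
    conv_lhs => rw [hspec]
    rw [hc_conj_mul U hUU, hc_conj_trace U hUU]
  -- Frobenius norm
  have hfro : (matFrobNorm A) ^ 2 = ∑ i, (μ i)^2 := by
    rw [matFrobNorm, Real.sq_sqrt (by positivity)]
    have h1 : ∑ i, ∑ j, (A i j) ^ 2 = (A * A).trace := by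
      rw [Matrix.trace]
      simp only [Matrix.diag, Matrix.mul_apply]
      refine Finset.sum_congr rfl fun i _ => Finset.sum_congr rfl fun j _ => ?_
      rw [hA.apply j i, sq]
    rw [h1]
    conv_lhs => rw [hspec]
    rw [hc_conj_mul U hUU, hc_conj_trace U hUU]
    exact Finset.sum_congr rfl fun i _ => (sq (μ i)).symm
  -- operator norm bound
  have hop : ∀ i, (1 + μ i)⁻¹ ≤ matOpNorm ((1 + A)⁻¹) := by
    intro i
    apply hc_le_opNorm A hH _ _ (le_of_lt (inv_pos.mpr (hposμ i))) i
    rw [hinv, ← Matrix.mulVec_mulVec, ← Matrix.mulVec_mulVec]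
    rw [show star U = star (hH.eigenvectorUnitary : Matrix n n ℝ) from rfl]
    rw [hH.star_eigenvectorUnitary_mulVec, Matrix.diagonal_mulVec_single, mul_one]
    have h1 : (Pi.single i ((1 + μ i)⁻¹) : n → ℝ)
        = (1 + μ i)⁻¹ • (Pi.single i 1 : n → ℝ) := by
      ext j
      by_cases hji : j = i
      · subst hji; simp
      · simp [Pi.single_eq_of_ne hji]
    rw [h1, Matrix.mulVec_smul]
    rw [show U = (hH.eigenvectorUnitary : Matrix n n ℝ) from rfl]
    rw [hH.eigenvectorUnitary_mulVec]
  have hopnn : 0 ≤ matOpNorm ((1 + A)⁻¹) := norm_nonneg _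
  -- assemble
  set C : ℝ := matOpNorm ((1 + A)⁻¹) with hC
  have key1 : A.trace - Real.log ((1 + A).det) = ∑ i, (μ i - Real.log (1 + μ i)) := by
    rw [htr, hlogdet, Finset.sum_sub_distrib]
  have key2 : Real.log ((1 + A).det) - (A * (1 + A)⁻¹).trace
      = ∑ i, (Real.log (1 + μ i) - μ i * (1 + μ i)⁻¹) := by
    rw [htr2, hlogdet, Finset.sum_sub_distrib]
  refine ⟨⟨?_, ?_⟩, ⟨?_, ?_⟩, ?_⟩
  · rw [key1]
    exact Finset.sum_nonneg fun i _ => by linarith [hc_scal_log_le (hposμ i)]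
  · rw [key1, hfro, Finset.mul_sum]
    refine Finset.sum_le_sum fun i _ => ?_
    calc μ i - Real.log (1 + μ i) ≤ (1 + μ i)⁻¹ * (μ i)^2 := hc_scalL2 (hposμ i)
      _ ≤ C * (μ i)^2 := mul_le_mul_of_nonneg_right (hop i) (sq_nonneg _)
  · rw [key2]
    refine Finset.sum_nonneg fun i _ => ?_
    have h := hc_scal_le_log (hposμ i)
    rw [div_eq_mul_inv] at h
    linarith
  · rw [key2, hfro, Finset.mul_sum]
    refine Finset.sum_le_sum fun i _ => ?_
    calc Real.log (1 + μ i) - μ i * (1 + μ i)⁻¹ ≤ (1 + μ i)⁻¹ * (μ i)^2 :=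
        hc_scalL4 (hposμ i)
      _ ≤ C * (μ i)^2 := mul_le_mul_of_nonneg_right (hop i) (sq_nonneg _)
  · intro hPSD
    have hμnn : ∀ i, 0 ≤ μ i := fun i => hPSD.eigenvalues_nonneg i
    constructor
    · rw [key1, hfro, Finset.mul_sum]
      refine Finset.sum_le_sum fun i _ => ?_
      have := hc_scalL5 (hμnn i)
      linarith
    · rw [key2, hfro, Finset.mul_sum]
      refine Finset.sum_le_sum fun i _ => ?_
      have := hc_scalL6 (hμnn i)
      linarith
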